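/- arXiv:1605.04983 — 3 statements merged into one kernel-verified Lean document; each statement's English description precedes it below -/
import Mathlib

section
/- Let d, k be positive reals and M, L, fmax positive reals. The function φ(ε') = (1−ε')·(min{1, ε'·fmax/(M·L)})^(d/k) on (0,1] attains its maximum at ε' = min{d/(d+k), M·L/fmax}. -/
lemma key_ineq (a t x : ℝ) (ha : 0 < a) (ht : 0 < t) (ht1 : t < 1)
    (hx : 0 < x) (hx1 : x ≤ 1) (h : (x - t) * (a * (1 - t) - t) ≤ 0) :
    (1 - x) * x ^ a ≤ (1 - t) * t ^ a := by
  rcases eq_or_lt_of_le hx1 with rfl | hx1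
  · simp only [sub_self, zero_mul]
    exact mul_nonneg (by linarith) (Real.rpow_pos_of_pos ht a).le
  have h1t : 0 < 1 - t := by linarith
  have h1x : 0 < 1 - x := by linarith
  have hw : a / (a + 1) + 1 / (a + 1) = 1 := by field_simp
  have hgm := Real.geom_mean_le_arith_mean2_weighted
    (by positivity : (0:ℝ) ≤ a / (a + 1)) (by positivity : (0:ℝ) ≤ 1 / (a + 1))
    (by positivity : (0:ℝ) ≤ x / t) (by positivity : (0:ℝ) ≤ (1 - x) / (1 - t)) hw
  have hnum : a * x * (1 - t) + (1 - x) * t ≤ (a + 1) * (t * (1 - t)) := by nlinarith [h]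
  have hAM : a / (a + 1) * (x / t) + 1 / (a + 1) * ((1 - x) / (1 - t)) ≤ 1 := by
    have he : a / (a + 1) * (x / t) + 1 / (a + 1) * ((1 - x) / (1 - t))
        = (a * x * (1 - t) + (1 - x) * t) / ((a + 1) * (t * (1 - t))) := by
      field_simp
    rw [he, div_le_one (by positivity)]
    exact hnum
  have h2 : ((x / t) ^ (a / (a + 1)) * ((1 - x) / (1 - t)) ^ (1 / (a + 1))) ^ (a + 1)
      ≤ 1 := by
    calc ((x / t) ^ (a / (a + 1)) * ((1 - x) / (1 - t)) ^ (1 / (a + 1))) ^ (a + 1)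
        ≤ (1 : ℝ) ^ (a + 1) :=
          Real.rpow_le_rpow (by positivity) (le_trans hgm hAM) (by positivity)
      _ = 1 := Real.one_rpow _
  have h3 : (x / t) ^ a * ((1 - x) / (1 - t)) ≤ 1 := by
    rw [Real.mul_rpow (by positivity) (by positivity), ← Real.rpow_mul (by positivity),
      ← Real.rpow_mul (by positivity), div_mul_cancel₀ _ (by positivity : (a:ℝ) + 1 ≠ 0),
      one_div, inv_mul_cancel₀ (by positivity : (a:ℝ) + 1 ≠ 0), Real.rpow_one] at h2
    exact h2
  have he : (x / t) ^ a * ((1 - x) / (1 - t)) = (x ^ a * (1 - x)) / (t ^ a * (1 - t)) := by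
    rw [Real.div_rpow hx.le ht.le]
    field_simp
  rw [he, div_le_one (by positivity)] at h3
  linarith [h3, mul_comm (x ^ a) (1 - x), mul_comm (t ^ a) (1 - t)]

theorem stmt_3 (d k M L fmax : ℝ) (hd : 0 < d) (hk : 0 < k)
    (hM : 0 < M) (hL : 0 < L) (hf : 0 < fmax) :
    min (d / (d + k)) (M * L / fmax) ∈ Set.Ioc (0 : ℝ) 1 ∧
    IsMaxOn (fun ε' : ℝ => (1 - ε') * (min 1 (ε' * fmax / (M * L))) ^ (d / k))
      (Set.Ioc (0 : ℝ) 1) (min (d / (d + k)) (M * L / fmax)) := by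
  have ha : 0 < d / k := div_pos hd hk
  set a := d / k with hadef
  set c := M * L / fmax with hcdef
  have hc : 0 < c := by positivity
  have hdk0 : 0 < d + k := by linarith
  have hdk : d / (d + k) = a / (a + 1) := by
    rw [hadef]; field_simp
  have hs : 0 < d / (d + k) := div_pos hd hdk0
  have hs1 : d / (d + k) < 1 := by rw [div_lt_one hdk0]; linarith
  have hxc : ∀ x : ℝ, x * fmax / (M * L) = x / c := by
    intro x; rw [hcdef]; field_simp
  refine ⟨⟨lt_min hs hc, le_trans (min_le_left _ _) hs1.le⟩, ?_⟩
  rw [isMaxOn_iff]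
  intro x hx
  obtain ⟨hx0, hx1⟩ := hx
  simp only [hxc]
  rcases le_or_gt (d / (d + k)) c with h | h
  · -- t = d/(d+k) = a/(a+1)
    rw [min_eq_left h]
    have htc : min 1 (d / (d + k) / c) = d / (d + k) / c :=
      min_eq_right ((div_le_one hc).2 h)
    rw [htc]
    have step1 : (1 - x) * (min 1 (x / c)) ^ a ≤ (1 - x) * (x / c) ^ a := by
      apply mul_le_mul_of_nonneg_left _ (by linarith)
      exact Real.rpow_le_rpow (le_min zero_le_one (by positivity)) (min_le_right _ _) ha.le
    refine le_trans step1 ?_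
    have hcond : (x - d / (d + k)) * (a * (1 - d / (d + k)) - d / (d + k)) ≤ 0 := by
      have h0 : a * (1 - d / (d + k)) - d / (d + k) = 0 := by
        rw [hadef]; field_simp; ring
      rw [h0, mul_zero]
    have hkey := key_ineq a (d / (d + k)) x ha hs hs1 hx0 hx1 hcond
    have e1 : (1 - x) * (x / c) ^ a = (1 - x) * x ^ a / c ^ a := by
      rw [Real.div_rpow hx0.le hc.le]; ring
    have e2 : (1 - d / (d + k)) * (d / (d + k) / c) ^ a
        = (1 - d / (d + k)) * (d / (d + k)) ^ a / c ^ a := by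
      rw [Real.div_rpow hs.le hc.le]; ring
    rw [e1, e2]
    exact (div_le_div_iff_of_pos_right (by positivity)).2 hkey
  · -- t = c < d/(d+k)
    rw [min_eq_right h.le]
    have hc1 : c < 1 := lt_trans h hs1
    have hcc : min 1 (c / c) = 1 := by rw [div_self hc.ne']; simp
    rw [hcc, Real.one_rpow, mul_one]
    rcases le_or_gt c x with hcx | hcx
    · have hm1 : (min 1 (x / c)) ^ a ≤ 1 :=
        Real.rpow_le_one (le_min zero_le_one (by positivity)) (min_le_left _ _) ha.le
      calc (1 - x) * (min 1 (x / c)) ^ a ≤ (1 - x) * 1 :=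
            mul_le_mul_of_nonneg_left hm1 (by linarith)
        _ = 1 - x := mul_one _
        _ ≤ 1 - c := by linarith
    · have hxcc : min 1 (x / c) = x / c :=
        min_eq_right (le_of_lt ((div_lt_one hc).2 hcx))
      rw [hxcc]
      have hcond : (x - c) * (a * (1 - c) - c) ≤ 0 := by
        have h1 : x - c ≤ 0 := by linarith
        have h2 : 0 ≤ a * (1 - c) - c := by
          rw [hdk] at h
          have := (lt_div_iff₀ (by positivity : (0:ℝ) < a + 1)).1 h
          nlinarith
        exact mul_nonpos_of_nonpos_of_nonneg h1 h2
      have hkey := key_ineq a c x ha hc hc1 hx0 hx1 hcond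
      have e1 : (1 - x) * (x / c) ^ a = (1 - x) * x ^ a / c ^ a := by
        rw [Real.div_rpow hx0.le hc.le]; ring
      rw [e1, div_le_iff₀ (by positivity : (0:ℝ) < c ^ a)]
      nlinarith [hkey, Real.rpow_pos_of_pos hc a]
end

section
/- The polynomial f(x) = x² admits no Handelman decomposition on [−1,1] with respect to g₁(x) = 1−x and g₂(x) = x+1: there do not exist finitely many nonnegative reals c_α indexed by α ∈ ℤ²_{≥0} such that x² = ∑_α c_α (1−x)^{α₁}(x+1)^{α₂} for all x ∈ ℝ. -/
theorem stmt_11 :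
    ¬ ∃ (S : Finset (ℕ × ℕ)) (c : ℕ × ℕ → ℝ),
      (∀ α ∈ S, 0 ≤ c α) ∧
      ∀ x : ℝ, x ^ 2 = ∑ α ∈ S, c α * (1 - x) ^ α.1 * (x + 1) ^ α.2 := by
  rintro ⟨S, c, hc, h⟩
  have h0 := h 0
  norm_num at h0
  have hall : ∀ α ∈ S, c α = 0 := by
    have := (Finset.sum_eq_zero_iff_of_nonneg (fun α hα => hc α hα)).mp h0.symm
    exact this
  have h1 := h 1
  rw [Finset.sum_eq_zero (fun α hα => by rw [hall α hα]; ring)] at h1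
  norm_num at h1
end

section
/- For every monomial x^m = x₁^{m₁}⋯x_d^{m_d} with |m| = m₁+⋯+m_d, the identity x^m = (1/|m|!) · ∑_{0≤p_i≤m_i} (−1)^{|m|−(p₁+⋯+p_d)} · C(m₁,p₁)⋯C(m_d,p_d) · (p₁x₁+⋯+p_d x_d)^{|m|} holds as an identity of polynomials in x₁,…,x_d. -/
open Finset fwdDiff

lemma fwd_pow (m : ℕ) :
    (∀ k < m, (fwdDiff (1:ℕ))^[m] (fun x : ℕ ↦ (x:ℝ)^k) = fun _ ↦ 0) ∧
    (fwdDiff (1:ℕ))^[m] (fun x : ℕ ↦ (x:ℝ)^m) = fun _ ↦ (Nat.factorial m : ℝ) := by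
  induction m with
  | zero => simp [Nat.factorial]
  | succ m ih =>
    have step : ∀ k : ℕ, (fwdDiff (1:ℕ)) (fun x : ℕ ↦ (x:ℝ)^k) =
        ∑ i ∈ range k, (Nat.choose k i : ℝ) • (fun x : ℕ ↦ (x:ℝ)^i) := by
      intro k
      ext y
      simp only [fwdDiff, Finset.sum_apply, Pi.smul_apply, smul_eq_mul]
      push_cast
      rw [add_pow, Finset.sum_range_succ]
      simp [mul_comm]
    have main : ∀ k : ℕ, (fwdDiff (1:ℕ))^[m+1] (fun x : ℕ ↦ (x:ℝ)^k) =
        ∑ i ∈ range k, (Nat.choose k i : ℝ) • (fwdDiff (1:ℕ))^[m] (fun x : ℕ ↦ (x:ℝ)^i) := by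
      intro k
      rw [Function.iterate_succ_apply, step, fwdDiff_iter_finset_sum]
      exact Finset.sum_congr rfl fun i _ ↦ fwdDiff_iter_const_smul _ _ _ _
    constructor
    · intro k hk
      rw [main]
      refine Finset.sum_eq_zero fun i hi ↦ ?_
      have := Finset.mem_range.mp hi
      rw [ih.1 i (by omega)]
      ext y; simp
    · rw [main, Finset.sum_range_succ]
      have h0 : ∑ i ∈ range m, (Nat.choose (m+1) i : ℝ) • (fwdDiff (1:ℕ))^[m] (fun x : ℕ ↦ (x:ℝ)^i) = 0 := by
        refine Finset.sum_eq_zero fun i hi ↦ ?_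
        rw [ih.1 i (Finset.mem_range.mp hi)]
        ext y; simp
      rw [h0, zero_add, ih.2]
      ext y
      simp only [Pi.smul_apply, smul_eq_mul, Nat.choose_succ_self_right]
      push_cast [Nat.factorial_succ]
      ring

lemma D_val (m k : ℕ) :
    ∑ j ∈ range (m+1), (-1:ℝ)^(m-j) * (Nat.choose m j : ℝ) * (j:ℝ)^k =
      if k = m then (Nat.factorial m : ℝ) else (if k < m then 0 else
        ∑ j ∈ range (m+1), (-1:ℝ)^(m-j) * (Nat.choose m j : ℝ) * (j:ℝ)^k) := by
  have h := fwdDiff_iter_eq_sum_shift (1:ℕ) (fun x : ℕ ↦ (x:ℝ)^k) m 0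
  have hsum : (fwdDiff (1:ℕ))^[m] (fun x : ℕ ↦ (x:ℝ)^k) 0 =
      ∑ j ∈ range (m+1), (-1:ℝ)^(m-j) * (Nat.choose m j : ℝ) * (j:ℝ)^k := by
    rw [h]
    refine Finset.sum_congr rfl fun j _ ↦ ?_
    have h0 : (0 + j • 1 : ℕ) = j := by simp
    rw [h0]
    simp only [zsmul_eq_mul]
    push_cast
    ring
  rw [← hsum]
  split_ifs with h1 h2
  · rw [h1, (fwd_pow m).2]
  · rw [(fwd_pow m).1 k h2]
  · rw [hsum]

lemma D_lt (m k : ℕ) (h : k < m) :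
    ∑ j ∈ range (m+1), (-1:ℝ)^(m-j) * (Nat.choose m j : ℝ) * (j:ℝ)^k = 0 := by
  rw [D_val]; simp [Nat.ne_of_lt h, h]

lemma D_self (m : ℕ) :
    ∑ j ∈ range (m+1), (-1:ℝ)^(m-j) * (Nat.choose m j : ℝ) * (j:ℝ)^m = (Nat.factorial m : ℝ) := by
  rw [D_val]; simp

theorem stmt_12 (d : ℕ) (m : Fin d → ℕ) (x : Fin d → ℝ) :
    ∏ i, x i ^ m i =
      (1 / (Nat.factorial (∑ i, m i) : ℝ)) *
        ∑ p ∈ Finset.Iic m,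
          (-1 : ℝ) ^ ((∑ i, m i) - (∑ i, p i)) *
            (∏ i, (Nat.choose (m i) (p i) : ℝ)) *
            (∑ i, (p i : ℝ) * x i) ^ (∑ i, m i) := by
  set n := ∑ i, m i with hn
  have hIic : (Finset.Iic m : Finset (Fin d → ℕ)) = Fintype.piFinset fun i ↦ Finset.Iic (m i) := by
    ext p; simp [Pi.le_def]
  have hrange : ∀ N : ℕ, Finset.Iic N = Finset.range (N+1) := by
    intro N; ext j; simp [Nat.lt_succ_iff]
  have key : (∑ p ∈ Finset.Iic m,
      (-1 : ℝ) ^ (n - (∑ i, p i)) * (∏ i, (Nat.choose (m i) (p i) : ℝ)) *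
        (∑ i, (p i : ℝ) * x i) ^ n) = (Nat.factorial n : ℝ) * ∏ i, x i ^ m i := by
    have step1 : ∀ p ∈ Finset.Iic m,
        (-1 : ℝ) ^ (n - (∑ i, p i)) * (∏ i, (Nat.choose (m i) (p i) : ℝ)) *
          (∑ i, (p i : ℝ) * x i) ^ n =
        ∑ k ∈ Finset.piAntidiag Finset.univ n,
          (Nat.multinomial Finset.univ k : ℝ) * (∏ i, x i ^ k i) *
            ∏ i, ((-1:ℝ)^(m i - p i) * (Nat.choose (m i) (p i) : ℝ) * (p i : ℝ)^(k i)) := by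
      intro p hp
      have hple : ∀ i, p i ≤ m i := fun i ↦ (Finset.mem_Iic.mp hp) i
      have hsign : (-1 : ℝ) ^ (n - (∑ i, p i)) = ∏ i, (-1:ℝ)^(m i - p i) := by
        rw [Finset.prod_pow_eq_pow_sum]
        congr 1
        rw [hn, Finset.sum_tsub_distrib _ (fun i _ ↦ hple i)]
      rw [hsign, Finset.sum_pow_eq_sum_piAntidiag, Finset.mul_sum]
      refine Finset.sum_congr rfl fun k hk ↦ ?_
      simp only [mul_pow, Finset.prod_mul_distrib]
      ring
    rw [Finset.sum_congr rfl step1, Finset.sum_comm]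
    have inner : ∀ k : Fin d → ℕ,
        ∑ p ∈ Finset.Iic m, ∏ i, ((-1:ℝ)^(m i - p i) * (Nat.choose (m i) (p i) : ℝ) * (p i : ℝ)^(k i)) =
        ∏ i, ∑ j ∈ Finset.range (m i + 1),
          ((-1:ℝ)^(m i - j) * (Nat.choose (m i) j : ℝ) * (j : ℝ)^(k i)) := by
      intro k
      rw [hIic]
      have hps := Finset.prod_univ_sum (fun i : Fin d ↦ Finset.Iic (m i))
        (fun i j ↦ (-1:ℝ)^(m i - j) * (Nat.choose (m i) j : ℝ) * (j : ℝ)^(k i))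
      rw [← hps]
      exact Finset.prod_congr rfl fun i _ ↦ by rw [hrange]
    rw [Finset.sum_eq_single m]
    · rw [← Finset.mul_sum, inner]
      have hfac : ∀ i : Fin d, ∑ j ∈ Finset.range (m i + 1),
          ((-1:ℝ)^(m i - j) * (Nat.choose (m i) j : ℝ) * (j : ℝ)^(m i)) = (Nat.factorial (m i) : ℝ) :=
        fun i ↦ D_self (m i)
      rw [Finset.prod_congr rfl fun i _ ↦ hfac i]
      have hspec := congrArg (Nat.cast : ℕ → ℝ) (Nat.multinomial_spec Finset.univ m)
      push_cast at hspec
      linear_combination (∏ i, x i ^ m i) * hspec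
    · intro k hk hne
      rw [← Finset.mul_sum, inner]
      obtain ⟨hksum, -⟩ := Finset.mem_piAntidiag.mp hk
      have hex : ∃ i, k i < m i := by
        by_contra hcon
        push_neg at hcon
        exact hne (funext fun i ↦
          ((Finset.sum_eq_sum_iff_of_le (fun i _ ↦ hcon i)).mp (hn ▸ hksum.symm ▸ rfl) i
            (Finset.mem_univ i)).symm)
      obtain ⟨i, hi⟩ := hex
      have hz : (∏ i, ∑ j ∈ Finset.range (m i + 1),
          ((-1:ℝ)^(m i - j) * (Nat.choose (m i) j : ℝ) * (j : ℝ)^(k i))) = 0 :=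
        Finset.prod_eq_zero (Finset.mem_univ i) (D_lt (m i) (k i) hi)
      rw [hz, mul_zero]
    · intro h
      exact absurd (Finset.mem_piAntidiag.mpr ⟨hn.symm, fun i _ ↦ Finset.mem_univ i⟩) h
  rw [key]
  rw [one_div, inv_mul_cancel_left₀ (by exact_mod_cast Nat.factorial_ne_zero n)]
end
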